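/- arXiv:2402.19293 — 2 statements merged into one kernel-verified Lean document; each statement's English description precedes it below -/
import Mathlib

section
/- (General mean bound, Eq. (GeneralMeanBound).) For every Hermitian operator G on ℂ^n ⊗ ℂ^n ⊗ ℂ^M and every g_max ≥ 0 with ‖G x‖ ≤ g_max ‖x‖ for all x, the expectation ⟨G⟩ in the final pure state Ψ_T satisfies Q_G − √(g_max² · Ξ) ≤ ⟨G⟩ ≤ Q_G + √(g_max² · Ξ), where Q_G = Re⟨Ψ̃_0, G Ψ_T⟩ is the no-cost baseline and Ξ = Tr[ρ (V_0† V_0)^{−1}] − 1 is the survival activity. -/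
open Matrix Kronecker Finset

noncomputable section

/-- Tensor product of two vectors. -/
def tvec {α β : Type*} (x : α → ℂ) (y : β → ℂ) : α × β → ℂ :=
  fun q => x q.1 * y q.2

/-- Standard basis vector `f_m` of the environment `ℂ^(M+1)`. -/
def stdv (M : ℕ) (m : Fin (M + 1)) : Fin (M + 1) → ℂ :=
  fun k => if k = m then 1 else 0

variable {n M : ℕ}

/-- The final pure state `Ψ_T = ∑_{i,m} √p_i ψ_i ⊗ (V_m ψ_i) ⊗ f_m` of R+S+E. -/
def PsiT (ψ : Fin n → Fin n → ℂ) (p : Fin n → ℝ)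
    (V : Fin (M + 1) → Matrix (Fin n) (Fin n) ℂ) :
    (Fin n × Fin n) × Fin (M + 1) → ℂ :=
  ∑ i, ∑ m, ((Real.sqrt (p i) : ℂ) • tvec (tvec (ψ i) (V m *ᵥ ψ i)) (stdv M m))

/-- The unnormalized vector `Ψ̃_0 = ∑_i √p_i ψ_i ⊗ ((V_0†)⁻¹ ψ_i) ⊗ f_0`. -/
def PsiTilde0 (ψ : Fin n → Fin n → ℂ) (p : Fin n → ℝ)
    (V : Fin (M + 1) → Matrix (Fin n) (Fin n) ℂ) :
    (Fin n × Fin n) × Fin (M + 1) → ℂ :=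
  ∑ i, ((Real.sqrt (p i) : ℂ) • tvec (tvec (ψ i) ((((V 0)ᴴ)⁻¹) *ᵥ ψ i)) (stdv M 0))

/-- The initial density matrix `ρ = ∑_i p_i ψ_i ψ_i†` of the principal system S. -/
def rho (ψ : Fin n → Fin n → ℂ) (p : Fin n → ℝ) : Matrix (Fin n) (Fin n) ℂ :=
  ∑ i, ((p i : ℂ) • vecMulVec (ψ i) (star (ψ i)))

/-- Expectation value `⟨G⟩ = ⟨Ψ, G Ψ⟩` (its real part, which is all of it for Hermitian `G`). -/
def expval {ι : Type*} [Fintype ι] (G : Matrix ι ι ℂ) (Ψ : ι → ℂ) : ℝ :=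
  (star Ψ ⬝ᵥ (G *ᵥ Ψ)).re

/-- Variance `Var[G] = ⟨Ψ, G² Ψ⟩ − ⟨G⟩²`. -/
def variance {ι : Type*} [Fintype ι] (G : Matrix ι ι ℂ) (Ψ : ι → ℂ) : ℝ :=
  expval (G * G) Ψ - (expval G Ψ) ^ 2

/-- The survival activity `Ξ = Tr[ρ (V_0† V_0)⁻¹] − 1`. -/
def survivalActivity (ψ : Fin n → Fin n → ℂ) (p : Fin n → ℝ)
    (V : Fin (M + 1) → Matrix (Fin n) (Fin n) ℂ) : ℝ :=
  ((rho ψ p * ((V 0)ᴴ * V 0)⁻¹).trace).re - 1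


/-- The no-cost baseline `Q_G = Re⟨Ψ̃_0, G Ψ_T⟩`. -/
def noCostBaseline (ψ : Fin n → Fin n → ℂ) (p : Fin n → ℝ)
    (V : Fin (M + 1) → Matrix (Fin n) (Fin n) ℂ)
    (G : Matrix ((Fin n × Fin n) × Fin (M + 1)) ((Fin n × Fin n) × Fin (M + 1)) ℂ) : ℝ :=
  (star (PsiTilde0 ψ p V) ⬝ᵥ (G *ᵥ PsiT ψ p V)).re


lemma tvec_dot {α β : Type*} [Fintype α] [Fintype β] (x x' : α → ℂ) (y y' : β → ℂ) :
    star (tvec x y) ⬝ᵥ tvec x' y' = (star x ⬝ᵥ x') * (star y ⬝ᵥ y') := by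
  simp only [dotProduct, tvec, Pi.star_apply]
  rw [Fintype.sum_prod_type, Finset.sum_mul_sum]
  refine Finset.sum_congr rfl fun a _ => Finset.sum_congr rfl fun b _ => ?_
  rw [star_mul']; ring

lemma stdv_dot (M : ℕ) (m m' : Fin (M + 1)) :
    star (stdv M m) ⬝ᵥ stdv M m' = if m = m' then (1:ℂ) else 0 := by
  simp only [dotProduct, stdv, Pi.star_apply]
  by_cases h : m = m'
  · subst h; simp
  · rw [if_neg h]
    apply Finset.sum_eq_zero
    intro k _
    by_cases hk : k = m
    · subst hk; simp [Ne.symm, h]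
    · simp [hk]

lemma self_dot {ι : Type*} [Fintype ι] (x : ι → ℂ) :
    star x ⬝ᵥ x = ((∑ k, ‖x k‖ ^ 2 : ℝ) : ℂ) := by
  simp only [dotProduct, Pi.star_apply, Complex.ofReal_sum]
  refine Finset.sum_congr rfl fun k _ => ?_
  rw [Complex.star_def, mul_comm, Complex.mul_conj, Complex.normSq_eq_norm_sq]

lemma dot_step {n : ℕ} (A B : Matrix (Fin n) (Fin n) ℂ) (x y : Fin n → ℂ) :
    star (A *ᵥ x) ⬝ᵥ (B *ᵥ y) = star x ⬝ᵥ ((Aᴴ * B) *ᵥ y) := by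
  rw [star_mulVec, ← dotProduct_mulVec, mulVec_mulVec]

lemma sum_dot {ι κ : Type*} [Fintype κ] (s : Finset ι) (f : ι → κ → ℂ) (v : κ → ℂ) :
    (∑ i ∈ s, f i) ⬝ᵥ v = ∑ i ∈ s, f i ⬝ᵥ v := by
  simp only [dotProduct, Finset.sum_apply, Finset.sum_mul]
  exact Finset.sum_comm

lemma dot_sum {ι κ : Type*} [Fintype κ] (s : Finset ι) (v : κ → ℂ) (f : ι → κ → ℂ) :
    v ⬝ᵥ (∑ i ∈ s, f i) = ∑ i ∈ s, v ⬝ᵥ f i := by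
  simp only [dotProduct, Finset.sum_apply, Finset.mul_sum]
  exact Finset.sum_comm


lemma gen_dot (ψ : Fin n → Fin n → ℂ)
    (hortho : ∀ i j, star (ψ i) ⬝ᵥ ψ j = if i = j then (1 : ℂ) else 0)
    (c c' : Fin n → Fin (M + 1) → ℂ)
    (a b : Fin n → Fin (M + 1) → Fin n → ℂ) :
    star (∑ i, ∑ m, c i m • tvec (tvec (ψ i) (a i m)) (stdv M m)) ⬝ᵥ
      (∑ i, ∑ m, c' i m • tvec (tvec (ψ i) (b i m)) (stdv M m)) =
    ∑ i, ∑ m, star (c i m) * c' i m * (star (a i m) ⬝ᵥ b i m) := by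
  rw [star_sum, sum_dot]
  refine Finset.sum_congr rfl fun i _ => ?_
  rw [star_sum, sum_dot]
  refine Finset.sum_congr rfl fun m _ => ?_
  rw [dot_sum]
  rw [Finset.sum_eq_single i]
  · rw [dot_sum, Finset.sum_eq_single m]
    · rw [star_smul, smul_dotProduct, dotProduct_smul, tvec_dot, tvec_dot, stdv_dot,
        hortho, if_pos rfl, if_pos rfl]
      simp [smul_eq_mul]; ring
    · intro m' _ hm'
      rw [star_smul, smul_dotProduct, dotProduct_smul, tvec_dot, tvec_dot, stdv_dot,
        if_neg (Ne.symm hm')]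
      simp
    · intro h; exact absurd (Finset.mem_univ m) h
  · intro j _ hj
    rw [dot_sum]
    apply Finset.sum_eq_zero
    intro m' _
    rw [star_smul, smul_dotProduct, dotProduct_smul, tvec_dot, tvec_dot, hortho,
      if_neg (Ne.symm hj)]
    simp
  · intro h; exact absurd (Finset.mem_univ i) h

lemma matsum_mulVec {ι : Type*} (s : Finset ι) (A : ι → Matrix (Fin n) (Fin n) ℂ)
    (y : Fin n → ℂ) : (∑ m ∈ s, A m) *ᵥ y = ∑ m ∈ s, A m *ᵥ y := by
  ext k
  simp only [mulVec, dotProduct, Finset.sum_apply, Matrix.sum_apply, Finset.sum_mul]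
  exact Finset.sum_comm

lemma psiTilde0_eq (ψ : Fin n → Fin n → ℂ) (p : Fin n → ℝ)
    (V : Fin (M + 1) → Matrix (Fin n) (Fin n) ℂ) :
    PsiTilde0 ψ p V =
      ∑ i, ∑ m, ((if m = 0 then (Real.sqrt (p i) : ℂ) else 0) •
        tvec (tvec (ψ i) ((((V 0)ᴴ)⁻¹) *ᵥ ψ i)) (stdv M m)) := by
  unfold PsiTilde0
  refine Finset.sum_congr rfl fun i _ => ?_
  symm
  rw [Finset.sum_eq_single 0]
  · simp
  · intro m _ hm; simp [hm]
  · intro h; simp at h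

lemma hsp (p : Fin n → ℝ) (hp : ∀ i, 0 ≤ p i) (i : Fin n) :
    star ((Real.sqrt (p i) : ℂ)) * (Real.sqrt (p i) : ℂ) = (p i : ℂ) := by
  rw [Complex.star_def, Complex.conj_ofReal, ← Complex.ofReal_mul,
    Real.mul_self_sqrt (hp i)]

lemma psiT_dot_psiT (ψ : Fin n → Fin n → ℂ)
    (hortho : ∀ i j, star (ψ i) ⬝ᵥ ψ j = if i = j then (1 : ℂ) else 0)
    (p : Fin n → ℝ) (hp : ∀ i, 0 ≤ p i) (hp1 : ∑ i, p i = 1)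
    (V : Fin (M + 1) → Matrix (Fin n) (Fin n) ℂ)
    (hKraus : ∑ m, (V m)ᴴ * V m = 1) :
    star (PsiT ψ p V) ⬝ᵥ PsiT ψ p V = 1 := by
  unfold PsiT
  rw [gen_dot ψ hortho (fun i _ => (Real.sqrt (p i) : ℂ)) (fun i _ => (Real.sqrt (p i) : ℂ))
    (fun i m => V m *ᵥ ψ i) (fun i m => V m *ᵥ ψ i)]
  have : ∀ i : Fin n, ∑ m : Fin (M+1),
      star ((Real.sqrt (p i) : ℂ)) * (Real.sqrt (p i) : ℂ) *
        (star (V m *ᵥ ψ i) ⬝ᵥ (V m *ᵥ ψ i)) = (p i : ℂ) := by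
    intro i
    have : ∀ m : Fin (M+1),
        star ((Real.sqrt (p i) : ℂ)) * (Real.sqrt (p i) : ℂ) *
          (star (V m *ᵥ ψ i) ⬝ᵥ (V m *ᵥ ψ i))
        = (p i : ℂ) * (star (ψ i) ⬝ᵥ (((V m)ᴴ * V m) *ᵥ ψ i)) := fun m => by
      rw [hsp p hp, dot_step]
    rw [Finset.sum_congr rfl fun m _ => this m, ← Finset.mul_sum,
      ← dot_sum, ← matsum_mulVec, hKraus, one_mulVec, hortho, if_pos rfl, mul_one]
  rw [Finset.sum_congr rfl fun i _ => this i]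
  rw [← Complex.ofReal_sum, hp1, Complex.ofReal_one]

lemma conjT_inv_conjT {A : Matrix (Fin n) (Fin n) ℂ} : ((Aᴴ)⁻¹)ᴴ = A⁻¹ := by
  rw [← Matrix.conjTranspose_nonsing_inv, Matrix.conjTranspose_conjTranspose]

lemma psiTilde0_dot_psiT (ψ : Fin n → Fin n → ℂ)
    (hortho : ∀ i j, star (ψ i) ⬝ᵥ ψ j = if i = j then (1 : ℂ) else 0)
    (p : Fin n → ℝ) (hp : ∀ i, 0 ≤ p i) (hp1 : ∑ i, p i = 1)
    (V : Fin (M + 1) → Matrix (Fin n) (Fin n) ℂ)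
    (hV0 : IsUnit (V 0)) :
    star (PsiTilde0 ψ p V) ⬝ᵥ PsiT ψ p V = 1 := by
  have hdet : IsUnit (V 0).det := (Matrix.isUnit_iff_isUnit_det _).mp hV0
  rw [psiTilde0_eq]
  unfold PsiT
  rw [gen_dot ψ hortho (fun i m => if m = 0 then (Real.sqrt (p i) : ℂ) else 0)
    (fun i _ => (Real.sqrt (p i) : ℂ))
    (fun i _ => (((V 0)ᴴ)⁻¹) *ᵥ ψ i) (fun i m => V m *ᵥ ψ i)]
  have : ∀ i : Fin n, ∑ m : Fin (M+1),
      star (if m = 0 then (Real.sqrt (p i) : ℂ) else 0) * (Real.sqrt (p i) : ℂ) *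
        (star ((((V 0)ᴴ)⁻¹) *ᵥ ψ i) ⬝ᵥ (V m *ᵥ ψ i)) = (p i : ℂ) := by
    intro i
    rw [Finset.sum_eq_single 0]
    · rw [if_pos rfl, hsp p hp, dot_step, conjT_inv_conjT,
        Matrix.nonsing_inv_mul _ hdet, one_mulVec, hortho, if_pos rfl, mul_one]
    · intro m _ hm; rw [if_neg hm]; simp
    · intro h; simp at h
  rw [Finset.sum_congr rfl fun i _ => this i, ← Complex.ofReal_sum, hp1,
    Complex.ofReal_one]

lemma psiT_dot_psiTilde0 (ψ : Fin n → Fin n → ℂ)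
    (hortho : ∀ i j, star (ψ i) ⬝ᵥ ψ j = if i = j then (1 : ℂ) else 0)
    (p : Fin n → ℝ) (hp : ∀ i, 0 ≤ p i) (hp1 : ∑ i, p i = 1)
    (V : Fin (M + 1) → Matrix (Fin n) (Fin n) ℂ)
    (hV0 : IsUnit (V 0)) :
    star (PsiT ψ p V) ⬝ᵥ PsiTilde0 ψ p V = 1 := by
  have hdet : IsUnit ((V 0)ᴴ).det := by
    rw [Matrix.det_conjTranspose]
    exact ((Matrix.isUnit_iff_isUnit_det _).mp hV0).star
  rw [psiTilde0_eq]
  unfold PsiT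
  rw [gen_dot ψ hortho (fun i _ => (Real.sqrt (p i) : ℂ))
    (fun i m => if m = 0 then (Real.sqrt (p i) : ℂ) else 0)
    (fun i m => V m *ᵥ ψ i) (fun i _ => (((V 0)ᴴ)⁻¹) *ᵥ ψ i)]
  have : ∀ i : Fin n, ∑ m : Fin (M+1),
      star ((Real.sqrt (p i) : ℂ)) * (if m = 0 then (Real.sqrt (p i) : ℂ) else 0) *
        (star (V m *ᵥ ψ i) ⬝ᵥ ((((V 0)ᴴ)⁻¹) *ᵥ ψ i)) = (p i : ℂ) := by
    intro i
    rw [Finset.sum_eq_single 0]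
    · rw [if_pos rfl, hsp p hp, dot_step,
        Matrix.mul_nonsing_inv _ hdet, one_mulVec, hortho, if_pos rfl, mul_one]
    · intro m _ hm; rw [if_neg hm]; simp
    · intro h; simp at h
  rw [Finset.sum_congr rfl fun i _ => this i, ← Complex.ofReal_sum, hp1,
    Complex.ofReal_one]

lemma trace_rho_mul (ψ : Fin n → Fin n → ℂ) (p : Fin n → ℝ)
    (A : Matrix (Fin n) (Fin n) ℂ) :
    (rho ψ p * A).trace = ∑ i, (p i : ℂ) * (star (ψ i) ⬝ᵥ (A *ᵥ ψ i)) := by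
  unfold rho
  rw [Finset.sum_mul, Matrix.trace_sum]
  refine Finset.sum_congr rfl fun i _ => ?_
  rw [Matrix.smul_mul, Matrix.trace_smul, smul_eq_mul]
  congr 1
  simp only [Matrix.trace, Matrix.diag, Matrix.mul_apply, vecMulVec_apply,
    Pi.star_apply, dotProduct, mulVec]
  rw [Finset.sum_comm]
  refine Finset.sum_congr rfl fun l _ => ?_
  rw [Finset.mul_sum]
  refine Finset.sum_congr rfl fun k _ => ?_
  ring

lemma psiTilde0_dot_psiTilde0 (ψ : Fin n → Fin n → ℂ)
    (hortho : ∀ i j, star (ψ i) ⬝ᵥ ψ j = if i = j then (1 : ℂ) else 0)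
    (p : Fin n → ℝ) (hp : ∀ i, 0 ≤ p i)
    (V : Fin (M + 1) → Matrix (Fin n) (Fin n) ℂ) :
    star (PsiTilde0 ψ p V) ⬝ᵥ PsiTilde0 ψ p V
      = (rho ψ p * ((V 0)ᴴ * V 0)⁻¹).trace := by
  rw [trace_rho_mul, psiTilde0_eq]
  rw [gen_dot ψ hortho (fun i m => if m = 0 then (Real.sqrt (p i) : ℂ) else 0)
    (fun i m => if m = 0 then (Real.sqrt (p i) : ℂ) else 0)
    (fun i _ => (((V 0)ᴴ)⁻¹) *ᵥ ψ i) (fun i _ => (((V 0)ᴴ)⁻¹) *ᵥ ψ i)]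
  refine Finset.sum_congr rfl fun i _ => ?_
  rw [Finset.sum_eq_single 0]
  · rw [if_pos rfl, hsp p hp, dot_step, conjT_inv_conjT, ← Matrix.mul_inv_rev]
  · intro m _ hm; rw [if_neg hm]; simp
  · intro h; simp at h

lemma abstract_bound {ι : Type*} [Fintype ι] (Φ Φ0 : ι → ℂ) (G : Matrix ι ι ℂ)
    (gmax Ξ : ℝ)
    (hΞ : Ξ = ∑ k, ‖Φ k - Φ0 k‖ ^ 2)
    (hnorm : (∑ k, ‖Φ k‖ ^ 2) = 1)
    (hgmax0 : 0 ≤ gmax)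
    (hgmax : Real.sqrt (∑ k, ‖(G *ᵥ Φ) k‖ ^ 2)
      ≤ gmax * Real.sqrt (∑ k, ‖Φ k‖ ^ 2)) :
    |(star Φ ⬝ᵥ (G *ᵥ Φ)).re - (star Φ0 ⬝ᵥ (G *ᵥ Φ)).re| ≤ Real.sqrt (gmax ^ 2 * Ξ) := by
  set v := G *ᵥ Φ with hv
  have hsub : (star Φ ⬝ᵥ v).re - (star Φ0 ⬝ᵥ v).re = (star (Φ - Φ0) ⬝ᵥ v).re := by
    rw [star_sub, sub_dotProduct, Complex.sub_re]
  rw [hsub]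
  have h1 : |(star (Φ - Φ0) ⬝ᵥ v).re| ≤ ‖star (Φ - Φ0) ⬝ᵥ v‖ :=
    Complex.abs_re_le_norm _
  have h2 : ‖star (Φ - Φ0) ⬝ᵥ v‖
      ≤ ∑ k, ‖(Φ - Φ0) k‖ * ‖v k‖ := by
    refine (norm_sum_le _ _).trans_eq ?_
    refine Finset.sum_congr rfl fun k _ => ?_
    rw [Pi.star_apply, Complex.star_def, norm_mul, Complex.norm_conj]
  have h3 : ∑ k, ‖(Φ - Φ0) k‖ * ‖v k‖
      ≤ Real.sqrt (∑ k, ‖(Φ - Φ0) k‖ ^ 2) *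
        Real.sqrt (∑ k, ‖v k‖ ^ 2) := by
    have hcs := Finset.sum_mul_sq_le_sq_mul_sq Finset.univ
      (fun k => ‖(Φ - Φ0) k‖) (fun k => ‖v k‖)
    have hnn : 0 ≤ ∑ k, ‖(Φ - Φ0) k‖ * ‖v k‖ :=
      Finset.sum_nonneg fun k _ => mul_nonneg (norm_nonneg _) (norm_nonneg _)
    calc ∑ k, ‖(Φ - Φ0) k‖ * ‖v k‖
        = Real.sqrt ((∑ k, ‖(Φ - Φ0) k‖ * ‖v k‖) ^ 2) :=
          (Real.sqrt_sq hnn).symm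
      _ ≤ Real.sqrt ((∑ k, ‖(Φ - Φ0) k‖ ^ 2) *
            (∑ k, ‖v k‖ ^ 2)) := Real.sqrt_le_sqrt hcs
      _ = _ := Real.sqrt_mul (Finset.sum_nonneg fun k _ => sq_nonneg _) _
  have hA : Real.sqrt (∑ k, ‖(Φ - Φ0) k‖ ^ 2) = Real.sqrt Ξ := by
    rw [hΞ]
    simp [Pi.sub_apply]
  have hB : Real.sqrt (∑ k, ‖v k‖ ^ 2) ≤ gmax := by
    calc Real.sqrt (∑ k, ‖v k‖ ^ 2)
        ≤ gmax * Real.sqrt (∑ k, ‖Φ k‖ ^ 2) := hgmax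
      _ = gmax := by rw [hnorm, Real.sqrt_one, mul_one]
  have hfin : Real.sqrt (∑ k, ‖(Φ - Φ0) k‖ ^ 2) *
      Real.sqrt (∑ k, ‖v k‖ ^ 2) ≤ Real.sqrt (gmax ^ 2 * Ξ) := by
    rw [hA, Real.sqrt_mul (sq_nonneg gmax), Real.sqrt_sq hgmax0]
    calc Real.sqrt Ξ * Real.sqrt (∑ k, ‖v k‖ ^ 2)
        ≤ Real.sqrt Ξ * gmax := by
          exact mul_le_mul_of_nonneg_left hB (Real.sqrt_nonneg _)
      _ = gmax * Real.sqrt Ξ := mul_comm _ _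
  linarith [h1, h2, h3, hfin]

/-- **General mean bound.** -/
theorem general_mean_bound
    (ψ : Fin n → Fin n → ℂ)
    (hortho : ∀ i j, star (ψ i) ⬝ᵥ ψ j = if i = j then (1 : ℂ) else 0)
    (p : Fin n → ℝ) (hp : ∀ i, 0 ≤ p i) (hp1 : ∑ i, p i = 1)
    (V : Fin (M + 1) → Matrix (Fin n) (Fin n) ℂ)
    (hKraus : ∑ m, (V m)ᴴ * V m = 1)
    (hV0 : IsUnit (V 0))
    (G : Matrix ((Fin n × Fin n) × Fin (M + 1)) ((Fin n × Fin n) × Fin (M + 1)) ℂ)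
    (hG : G.IsHermitian)
    (gmax : ℝ) (hgmax0 : 0 ≤ gmax)
    (hgmax : ∀ x : (Fin n × Fin n) × Fin (M + 1) → ℂ,
      Real.sqrt (∑ k, ‖(G *ᵥ x) k‖ ^ 2)
        ≤ gmax * Real.sqrt (∑ k, ‖x k‖ ^ 2)) :
    noCostBaseline ψ p V G - Real.sqrt (gmax ^ 2 * survivalActivity ψ p V)
        ≤ expval G (PsiT ψ p V) ∧
      expval G (PsiT ψ p V)
        ≤ noCostBaseline ψ p V G + Real.sqrt (gmax ^ 2 * survivalActivity ψ p V) := by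
  have h11 := psiT_dot_psiT ψ hortho p hp hp1 V hKraus
  have h01 := psiTilde0_dot_psiT ψ hortho p hp hp1 V hV0
  have h10 := psiT_dot_psiTilde0 ψ hortho p hp hp1 V hV0
  have h00 := psiTilde0_dot_psiTilde0 ψ hortho p hp V
  have huu : star (PsiT ψ p V - PsiTilde0 ψ p V) ⬝ᵥ (PsiT ψ p V - PsiTilde0 ψ p V)
      = (rho ψ p * ((V 0)ᴴ * V 0)⁻¹).trace - 1 := by
    rw [star_sub, sub_dotProduct, dotProduct_sub, dotProduct_sub, h11, h01, h10, h00]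
    ring
  have hΞ : survivalActivity ψ p V
      = ∑ k, ‖PsiT ψ p V k - PsiTilde0 ψ p V k‖ ^ 2 := by
    have h2 := huu.symm.trans (self_dot (PsiT ψ p V - PsiTilde0 ψ p V))
    have h3 := congrArg Complex.re h2
    rw [Complex.sub_re, Complex.one_re, Complex.ofReal_re] at h3
    unfold survivalActivity
    rw [h3]
    simp [Pi.sub_apply]
  have hnorm : (∑ k, ‖PsiT ψ p V k‖ ^ 2) = 1 := by
    have h4 := (self_dot (PsiT ψ p V)).symm.trans h11
    exact_mod_cast h4
  have hmain : |expval G (PsiT ψ p V) - noCostBaseline ψ p V G|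
      ≤ Real.sqrt (gmax ^ 2 * survivalActivity ψ p V) :=
    abstract_bound (PsiT ψ p V) (PsiTilde0 ψ p V) G gmax
      (survivalActivity ψ p V) hΞ hnorm hgmax0 (hgmax _)
  obtain ⟨hL, hR⟩ := abs_le.mp hmain
  exact ⟨by linarith, by linarith⟩
end
end

section
/- (No-cost baseline of a separable observable.) For a separable observable G^sep = ∑_{l,m} g_{lm} φ_l φ_l† ⊗ f_m f_m† with real coefficients g_{lm} and orthonormal basis {φ_l} of ℂ^n ⊗ ℂ^n, the no-cost baseline reduces to the post-selected form: Re⟨Ψ̃_0, G^sep Ψ_T⟩ = p_0 · Tr[ρ_RS^{V_0} H], where p_0 = Tr[ρ V_0† V_0], ρ_RS^{V_0} = (I_n ⊗ V_0) Ψ_RS(0) Ψ_RS(0)† (I_n ⊗ V_0†)/p_0, H = ½{G_0^sep, I_n ⊗ (V_0 V_0†)^{−1}} and G_0^sep = ∑_l g_{l0} φ_l φ_l†. -/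
open Matrix Kronecker Finset

noncomputable section

variable {n M : ℕ}

/-- The purified initial state `Ψ_RS(0) = ∑_i √p_i ψ_i ⊗ ψ_i` of R+S. -/
def PsiRS (ψ : Fin n → Fin n → ℂ) (p : Fin n → ℝ) : Fin n × Fin n → ℂ :=
  ∑ i, ((Real.sqrt (p i) : ℂ) • tvec (ψ i) (ψ i))

/-- A separable observable `G^sep = ∑_{l,m} g_{lm} φ_l φ_l† ⊗ f_m f_m†`. -/
def Gsep (M : ℕ) (φ : Fin (n * n) → Fin n × Fin n → ℂ) (g : Fin (n * n) → Fin (M + 1) → ℝ) :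
    Matrix ((Fin n × Fin n) × Fin (M + 1)) ((Fin n × Fin n) × Fin (M + 1)) ℂ :=
  ∑ l, ∑ m, ((g l m : ℂ) •
    (vecMulVec (φ l) (star (φ l)) ⊗ₖ vecMulVec (stdv M m) (star (stdv M m))))

/-- The conditional `m = 0` part `G_0^sep = ∑_l g_{l0} φ_l φ_l†`. -/
def Gsep0 (M : ℕ) (φ : Fin (n * n) → Fin n × Fin n → ℂ) (g : Fin (n * n) → Fin (M + 1) → ℝ) :
    Matrix (Fin n × Fin n) (Fin n × Fin n) ℂ :=
  ∑ l, ((g l 0 : ℂ) • vecMulVec (φ l) (star (φ l)))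

/-- The no-jump probability `p_0 = Tr[ρ V_0† V_0]`. -/
def noJumpProb (ψ : Fin n → Fin n → ℂ) (p : Fin n → ℝ)
    (V : Fin (M + 1) → Matrix (Fin n) (Fin n) ℂ) : ℝ :=
  ((rho ψ p * ((V 0)ᴴ * V 0)).trace).re

/-- The post-selected state `ρ_RS^{V_0} = (I ⊗ V_0) Ψ_RS Ψ_RS† (I ⊗ V_0†) / p_0`. -/
def rhoRSV0 (ψ : Fin n → Fin n → ℂ) (p : Fin n → ℝ)
    (V : Fin (M + 1) → Matrix (Fin n) (Fin n) ℂ) :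
    Matrix (Fin n × Fin n) (Fin n × Fin n) ℂ :=
  ((noJumpProb ψ p V : ℂ))⁻¹ •
    (((1 : Matrix (Fin n) (Fin n) ℂ) ⊗ₖ V 0) *
      vecMulVec (PsiRS ψ p) (star (PsiRS ψ p)) *
      ((1 : Matrix (Fin n) (Fin n) ℂ) ⊗ₖ (V 0)ᴴ))

/-- The Hermitian operator `H = ½{G_0^sep, I ⊗ (V_0 V_0†)⁻¹}`. -/
def Hop (M : ℕ) (φ : Fin (n * n) → Fin n × Fin n → ℂ) (g : Fin (n * n) → Fin (M + 1) → ℝ)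
    (V : Fin (M + 1) → Matrix (Fin n) (Fin n) ℂ) :
    Matrix (Fin n × Fin n) (Fin n × Fin n) ℂ :=
  (1 / 2 : ℂ) •
    (Gsep0 M φ g * ((1 : Matrix (Fin n) (Fin n) ℂ) ⊗ₖ (V 0 * (V 0)ᴴ)⁻¹) +
     ((1 : Matrix (Fin n) (Fin n) ℂ) ⊗ₖ (V 0 * (V 0)ᴴ)⁻¹) * Gsep0 M φ g)

/-- The no-cost baseline `Q_{G^sep} = p_0 Tr[ρ_RS^{V_0} H]`. -/
def Qsep (M : ℕ) (ψ : Fin n → Fin n → ℂ) (p : Fin n → ℝ)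
    (φ : Fin (n * n) → Fin n × Fin n → ℂ) (g : Fin (n * n) → Fin (M + 1) → ℝ)
    (V : Fin (M + 1) → Matrix (Fin n) (Fin n) ℂ) : ℝ :=
  noJumpProb ψ p V * ((rhoRSV0 ψ p V * Hop M φ g V).trace).re


lemma tvec_smul_left {α β : Type*} (c : ℂ) (x : α → ℂ) (y : β → ℂ) :
    tvec (c • x) y = c • tvec x y := by
  funext q; simp [tvec, mul_assoc]

lemma tvec_sum_left {ι α β : Type*} (s : Finset ι) (x : ι → α → ℂ) (y : β → ℂ) :
    tvec (∑ i ∈ s, x i) y = ∑ i ∈ s, tvec (x i) y := by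
  funext q; simp [tvec, Finset.sum_apply, Finset.sum_mul]

lemma star_tvec_dot {α β : Type*} [Fintype α] [Fintype β]
    (a c : α → ℂ) (b d : β → ℂ) :
    star (tvec a b) ⬝ᵥ tvec c d = (star a ⬝ᵥ c) * (star b ⬝ᵥ d) := by
  simp only [dotProduct, Pi.star_apply, tvec]
  rw [Fintype.sum_prod_type, Finset.sum_mul_sum]
  refine Finset.sum_congr rfl fun i _ => Finset.sum_congr rfl fun j _ => ?_
  simp [star_mul']; ring

lemma kron_mulVec {α β : Type*} [Fintype α] [Fintype β]
    (P : Matrix α α ℂ) (Q : Matrix β β ℂ) (a : α → ℂ) (b : β → ℂ) :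
    (P ⊗ₖ Q) *ᵥ tvec a b = tvec (P *ᵥ a) (Q *ᵥ b) := by
  funext q
  simp only [mulVec, dotProduct, tvec, kroneckerMap_apply]
  rw [Fintype.sum_prod_type, Finset.sum_mul_sum]
  refine Finset.sum_congr rfl fun i _ => Finset.sum_congr rfl fun j _ => ?_
  ring

lemma mulVec_sum' {ι α β : Type*} [Fintype β] (s : Finset ι)
    (Mm : Matrix α β ℂ) (f : ι → β → ℂ) :
    Mm *ᵥ (∑ i ∈ s, f i) = ∑ i ∈ s, Mm *ᵥ f i := by
  funext j
  simp only [mulVec, dotProduct, Finset.sum_apply, Finset.mul_sum]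
  exact Finset.sum_comm

lemma sum_mulVec' {ι α β : Type*} [Fintype β] (s : Finset ι)
    (Mm : ι → Matrix α β ℂ) (v : β → ℂ) :
    (∑ i ∈ s, Mm i) *ᵥ v = ∑ i ∈ s, Mm i *ᵥ v := by
  funext j
  rw [Finset.sum_apply]
  simp only [mulVec, dotProduct, Matrix.sum_apply, Finset.sum_mul]
  exact Finset.sum_comm

lemma vecMulVec_mulVec' {α β : Type*} [Fintype β] (x : α → ℂ) (y v : β → ℂ) :
    vecMulVec x y *ᵥ v = (y ⬝ᵥ v) • x := by
  funext i
  simp only [mulVec, dotProduct, vecMulVec_apply, Pi.smul_apply, smul_eq_mul, Finset.sum_mul]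
  exact Finset.sum_congr rfl fun j _ => by ring

lemma mul_vecMulVec' {α β γ : Type*} [Fintype α] (N : Matrix γ α ℂ) (x : α → ℂ) (y : β → ℂ) :
    N * vecMulVec x y = vecMulVec (N *ᵥ x) y := by
  ext i j
  simp only [mul_apply, vecMulVec_apply, mulVec, dotProduct, Finset.sum_mul]
  exact Finset.sum_congr rfl fun k _ => by ring

lemma vecMulVec_mul' {α β γ : Type*} [Fintype β] (x : α → ℂ) (y : β → ℂ) (N : Matrix β γ ℂ) :
    vecMulVec x y * N = vecMulVec x (y ᵥ* N) := by
  ext i j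
  simp only [mul_apply, vecMulVec_apply, vecMul, dotProduct, Finset.mul_sum]
  exact Finset.sum_congr rfl fun k _ => by ring

lemma trace_vecMulVec' {α : Type*} [Fintype α] (x y : α → ℂ) :
    (vecMulVec x y).trace = y ⬝ᵥ x := by
  simp [Matrix.trace, Matrix.diag, vecMulVec_apply, dotProduct, mul_comm]

lemma star_stdv_dot {M : ℕ} (a b : Fin (M + 1)) :
    star (stdv M a) ⬝ᵥ stdv M b = if a = b then 1 else 0 := by
  simp [stdv, dotProduct, apply_ite, eq_comm]

lemma kron_conjTranspose {α β : Type*} (A : Matrix α α ℂ) (B : Matrix β β ℂ) :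
    (A ⊗ₖ B)ᴴ = Aᴴ ⊗ₖ Bᴴ := by
  ext i j
  simp [conjTranspose_apply, kroneckerMap_apply, star_mul']

lemma tvec_zero_right {α β : Type*} (x : α → ℂ) : tvec x (0 : β → ℂ) = 0 := by
  funext q; simp [tvec]

lemma tvec_smul_right {α β : Type*} (c : ℂ) (x : α → ℂ) (y : β → ℂ) :
    tvec x (c • y) = c • tvec x y := by
  funext q; simp [tvec]; ring

lemma dotProduct_sum' {ι α : Type*} [Fintype α] (s : Finset ι) (v : α → ℂ) (w : ι → α → ℂ) :
    v ⬝ᵥ (∑ i ∈ s, w i) = ∑ i ∈ s, v ⬝ᵥ w i := by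
  simp only [dotProduct, Finset.sum_apply, Finset.mul_sum]
  exact Finset.sum_comm

/-- **No-cost baseline of a separable observable.** For a separable observable
`G^sep = ∑_{l,m} g_{lm} φ_l φ_l† ⊗ f_m f_m†`, the no-cost baseline `Re⟨Ψ̃_0, G^sep Ψ_T⟩`
reduces to the post-selected form `p_0 Tr[ρ_RS^{V_0} H]`. -/

theorem separable_no_cost_baseline
    (ψ : Fin n → Fin n → ℂ)
    (hortho : ∀ i j, star (ψ i) ⬝ᵥ ψ j = if i = j then (1 : ℂ) else 0)
    (p : Fin n → ℝ) (hp : ∀ i, 0 ≤ p i) (hp1 : ∑ i, p i = 1)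
    (V : Fin (M + 1) → Matrix (Fin n) (Fin n) ℂ)
    (hKraus : ∑ m, (V m)ᴴ * V m = 1)
    (hV0 : IsUnit (V 0))
    (hp0 : 0 < noJumpProb ψ p V)
    (φ : Fin (n * n) → Fin n × Fin n → ℂ)
    (hφ : ∀ l l', star (φ l) ⬝ᵥ φ l' = if l = l' then (1 : ℂ) else 0)
    (g : Fin (n * n) → Fin (M + 1) → ℝ) :
    (star (PsiTilde0 ψ p V) ⬝ᵥ (Gsep M φ g *ᵥ PsiT ψ p V)).re
      = noJumpProb ψ p V * ((rhoRSV0 ψ p V * Hop M φ g V).trace).re := by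
  classical
  have hdet : IsUnit (V 0).det := (Matrix.isUnit_iff_isUnit_det _).mp hV0
  have hdetH : IsUnit ((V 0)ᴴ).det := by
    rw [Matrix.det_conjTranspose]; exact hdet.star
  set W : Matrix (Fin n) (Fin n) ℂ := ((V 0)ᴴ)⁻¹ with hWdef
  set Ψ : Fin n × Fin n → ℂ := PsiRS ψ p with hΨdef
  set χ : Fin n × Fin n → ℂ := ((1 : Matrix (Fin n) (Fin n) ℂ) ⊗ₖ V 0) *ᵥ Ψ with hχdef
  set χt : Fin n × Fin n → ℂ := ((1 : Matrix (Fin n) (Fin n) ℂ) ⊗ₖ W) *ᵥ Ψ with hχtdef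
  have hΨsum : ∀ Q : Matrix (Fin n) (Fin n) ℂ,
      ((1 : Matrix (Fin n) (Fin n) ℂ) ⊗ₖ Q) *ᵥ Ψ
        = ∑ i, (Real.sqrt (p i) : ℂ) • tvec (ψ i) (Q *ᵥ ψ i) := by
    intro Q
    rw [hΨdef]
    unfold PsiRS
    rw [mulVec_sum']
    refine Finset.sum_congr rfl fun i _ => ?_
    rw [mulVec_smul, kron_mulVec, one_mulVec]
  have hT0 : PsiTilde0 ψ p V = tvec χt (stdv M 0) := by
    rw [hχtdef, hΨsum W, tvec_sum_left]
    unfold PsiTilde0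
    exact Finset.sum_congr rfl fun i _ => (tvec_smul_left _ _ _).symm
  have hT : PsiT ψ p V
      = ∑ m, tvec (((1 : Matrix (Fin n) (Fin n) ℂ) ⊗ₖ V m) *ᵥ Ψ) (stdv M m) := by
    unfold PsiT
    rw [Finset.sum_comm]
    refine Finset.sum_congr rfl fun m _ => ?_
    rw [hΨsum (V m), tvec_sum_left]
    exact Finset.sum_congr rfl fun i _ => (tvec_smul_left _ _ _).symm
  -- LHS reduction
  have hLHS : star (PsiTilde0 ψ p V) ⬝ᵥ (Gsep M φ g *ᵥ PsiT ψ p V)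
      = star χt ⬝ᵥ (Gsep0 M φ g *ᵥ χ) := by
    rw [hT0, hT]
    unfold Gsep Gsep0
    rw [sum_mulVec', sum_mulVec', dotProduct_sum', dotProduct_sum']
    simp only [sum_mulVec', smul_mulVec, dotProduct_sum', dotProduct_smul,
      mulVec_sum', kron_mulVec, star_tvec_dot, vecMulVec_mulVec', star_stdv_dot,
      smul_eq_mul, mul_ite, ite_mul, mul_one, one_mul, mul_zero, zero_mul,
      Finset.sum_ite_eq, Finset.sum_ite_eq', Finset.mem_univ, if_true]
    rfl
  -- matrix identities
  have hABA : ((1 : Matrix (Fin n) (Fin n) ℂ) ⊗ₖ V 0) * vecMulVec Ψ (star Ψ) *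
      ((1 : Matrix (Fin n) (Fin n) ℂ) ⊗ₖ (V 0)ᴴ) = vecMulVec χ (star χ) := by
    rw [mul_vecMulVec', vecMulVec_mul', hχdef]
    congr 1
    rw [star_mulVec, kron_conjTranspose, conjTranspose_one]
  have hKA : ((1 : Matrix (Fin n) (Fin n) ℂ) ⊗ₖ (V 0 * (V 0)ᴴ)⁻¹) *
      ((1 : Matrix (Fin n) (Fin n) ℂ) ⊗ₖ V 0) = (1 : Matrix (Fin n) (Fin n) ℂ) ⊗ₖ W := by
    rw [← mul_kronecker_mul, one_mul]
    congr 1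
    rw [Matrix.mul_inv_rev, Matrix.mul_assoc, Matrix.nonsing_inv_mul _ hdet, Matrix.mul_one]
  have hAHK : ((1 : Matrix (Fin n) (Fin n) ℂ) ⊗ₖ (V 0)ᴴ) *
      ((1 : Matrix (Fin n) (Fin n) ℂ) ⊗ₖ (V 0 * (V 0)ᴴ)⁻¹)
        = (1 : Matrix (Fin n) (Fin n) ℂ) ⊗ₖ (V 0)⁻¹ := by
    rw [← mul_kronecker_mul, one_mul]
    congr 1
    rw [Matrix.mul_inv_rev, ← Matrix.mul_assoc, Matrix.mul_nonsing_inv _ hdetH, Matrix.one_mul]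
  have hWH : Wᴴ = (V 0)⁻¹ := by
    rw [hWdef, Matrix.conjTranspose_nonsing_inv, conjTranspose_conjTranspose]
  have hχK : star χ ᵥ* ((1 : Matrix (Fin n) (Fin n) ℂ) ⊗ₖ (V 0 * (V 0)ᴴ)⁻¹) = star χt := by
    rw [hχdef, hχtdef, star_mulVec, star_mulVec, kron_conjTranspose, kron_conjTranspose,
      conjTranspose_one, vecMul_vecMul, hAHK, hWH]
  have hKχ : ((1 : Matrix (Fin n) (Fin n) ℂ) ⊗ₖ (V 0 * (V 0)ᴴ)⁻¹) *ᵥ χ = χt := by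
    rw [hχdef, hχtdef, mulVec_mulVec, hKA]
  have hG0H : (Gsep0 M φ g)ᴴ = Gsep0 M φ g := by
    unfold Gsep0
    rw [conjTranspose_sum]
    refine Finset.sum_congr rfl fun l _ => ?_
    ext i j
    simp [conjTranspose_apply, vecMulVec_apply, star_mul', Complex.conj_ofReal, mul_comm]
  have ht_b : (vecMulVec χ (star χ) *
        (((1 : Matrix (Fin n) (Fin n) ℂ) ⊗ₖ (V 0 * (V 0)ᴴ)⁻¹) * Gsep0 M φ g)).trace
      = star χt ⬝ᵥ (Gsep0 M φ g *ᵥ χ) := by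
    rw [vecMulVec_mul', trace_vecMulVec', ← vecMul_vecMul, hχK]
    exact (dotProduct_mulVec _ _ _).symm
  have ht_a : (vecMulVec χ (star χ) *
        (Gsep0 M φ g * ((1 : Matrix (Fin n) (Fin n) ℂ) ⊗ₖ (V 0 * (V 0)ᴴ)⁻¹))).trace
      = star χ ⬝ᵥ (Gsep0 M φ g *ᵥ χt) := by
    rw [vecMulVec_mul', trace_vecMulVec', ← dotProduct_mulVec, ← mulVec_mulVec, hKχ]
  have hconj : star χ ⬝ᵥ (Gsep0 M φ g *ᵥ χt) = star (star χt ⬝ᵥ (Gsep0 M φ g *ᵥ χ)) := by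
    rw [star_dotProduct]
    congr 1
    rw [star_mulVec, hG0H]
    exact (dotProduct_mulVec _ _ _).symm
  -- assemble RHS
  set z : ℂ := star χt ⬝ᵥ (Gsep0 M φ g *ᵥ χ) with hzdef
  have htr : (rhoRSV0 ψ p V * Hop M φ g V).trace
      = (((noJumpProb ψ p V : ℝ) : ℂ))⁻¹ * ((1 / 2 : ℂ) * (star z + z)) := by
    unfold rhoRSV0 Hop
    rw [← hΨdef, hABA, Matrix.smul_mul, Matrix.mul_smul, trace_smul, trace_smul,
      Matrix.mul_add, trace_add, ht_a, ht_b, hconj]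
    simp [smul_eq_mul, mul_assoc]
  have hz2 : star z + z = ((2 * z.re : ℝ) : ℂ) := by
    rw [add_comm]
    exact Complex.add_conj z
  rw [hLHS, htr, hz2]
  have : (((noJumpProb ψ p V : ℝ) : ℂ))⁻¹ * ((1 / 2 : ℂ) * ((2 * z.re : ℝ) : ℂ))
      = (((noJumpProb ψ p V)⁻¹ * z.re : ℝ) : ℂ) := by
    push_cast
    ring
  rw [this, Complex.ofReal_re]
  rw [← mul_assoc, mul_inv_cancel₀ (ne_of_gt hp0), one_mul]
end
end
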